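/- For a vanishing mode with λ > 0, subdomain widths at least H > 0 and overlap δ ≤ H/2, the entries M := e^{-λ(L-l-δ)}(1-ρ_j²)/(1-ρ_j² e^{-2λ(L-l)}) with L - l ≥ H and |ρ_j| = 1 satisfy |M| ≤ 2·e^{-λH/2}/(1 - e^{-2λH}). -/

import Mathlib

/-- Evanescent-mode bound on the sweep-transfer symbol
`M = e^{-λ(L-l-δ)} (1 - ρ_j²) / (1 - ρ_j² e^{-2λ(L-l)})`. -/
theorem stmt7 (lam L l δ H : ℝ) (hlam : 0 < lam) (hH : 0 < H)
    (hLl : H ≤ L - l) (hδ0 : 0 < δ) (hδ : δ ≤ H / 2)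
    (ρj : ℂ) (hρj : ‖ρj‖ = 1)
    (hden : ρj ^ 2 * (Real.exp (-2 * lam * (L - l)) : ℂ) ≠ 1) :
    ‖((Real.exp (-lam * (L - l - δ)) : ℂ) * (1 - ρj ^ 2) /
        (1 - ρj ^ 2 * (Real.exp (-2 * lam * (L - l)) : ℂ)))‖ ≤
      2 * Real.exp (-lam * H / 2) / (1 - Real.exp (-2 * lam * H)) := by
  have habs2 : ‖ρj ^ 2‖ = 1 := by
    rw [norm_pow, hρj]; norm_num
  have hz : ‖ρj ^ 2 * (Real.exp (-2 * lam * (L - l)) : ℂ)‖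
      = Real.exp (-2 * lam * (L - l)) := by
    rw [norm_mul, habs2, one_mul, Complex.norm_real, Real.norm_eq_abs,
      abs_of_pos (Real.exp_pos _)]
  -- numerator bound
  have hnum : ‖(Real.exp (-lam * (L - l - δ)) : ℂ) * (1 - ρj ^ 2)‖
      ≤ 2 * Real.exp (-lam * H / 2) := by
    rw [norm_mul, Complex.norm_real, Real.norm_eq_abs, abs_of_pos (Real.exp_pos _)]
    have h1 : ‖1 - ρj ^ 2‖ ≤ 2 := by
      calc ‖1 - ρj ^ 2‖ ≤ ‖(1 : ℂ)‖ + ‖ρj ^ 2‖ :=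
            norm_sub_le _ _
        _ = 2 := by rw [habs2, norm_one]; norm_num
    have h2 : Real.exp (-lam * (L - l - δ)) ≤ Real.exp (-lam * H / 2) := by
      apply Real.exp_le_exp.2
      nlinarith
    calc Real.exp (-lam * (L - l - δ)) * ‖1 - ρj ^ 2‖
        ≤ Real.exp (-lam * H / 2) * 2 := by
          apply mul_le_mul h2 h1 (norm_nonneg _) (Real.exp_pos _).le
      _ = 2 * Real.exp (-lam * H / 2) := by ring
  -- denominator bound
  have hdenlb : 1 - Real.exp (-2 * lam * H)
      ≤ ‖1 - ρj ^ 2 * (Real.exp (-2 * lam * (L - l)) : ℂ)‖ := by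
    have h3 : Real.exp (-2 * lam * (L - l)) ≤ Real.exp (-2 * lam * H) := by
      apply Real.exp_le_exp.2; nlinarith
    calc 1 - Real.exp (-2 * lam * H)
        ≤ 1 - Real.exp (-2 * lam * (L - l)) := by linarith
      _ = ‖(1 : ℂ)‖ - ‖ρj ^ 2 * (Real.exp (-2 * lam * (L - l)) : ℂ)‖ := by
          rw [hz, norm_one]
      _ ≤ ‖1 - ρj ^ 2 * (Real.exp (-2 * lam * (L - l)) : ℂ)‖ := by
          exact norm_sub_norm_le _ _
  have hdpos : 0 < 1 - Real.exp (-2 * lam * H) := by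
    have : Real.exp (-2 * lam * H) < 1 := by
      rw [Real.exp_lt_one_iff]; nlinarith
    linarith
  rw [norm_div]
  apply div_le_div₀ (by positivity) hnum hdpos hdenlb
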